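/- arXiv:2104.08759 — 3 statements merged into one kernel-verified Lean document; each statement's English description precedes it below -/
import Mathlib

section
/- Let T : ℕ → ℕ → ℕ be the CBS recurrence defined by T(r,s) = 1 whenever r = 0 or s = 0, T(1,s) = 3 for all s ≥ 1, and T(r,s) = T(r−1,s) + T(r−2,s−1) + 1 for all r ≥ 2 and s ≥ 1. Then for all natural numbers r ≥ 1 and s ≥ 1 one has T(r,s) ≤ 3 · r^s. -/
/-- For the CBS recurrence `T`, `T r s ≤ 3 * r ^ s` for all `r, s ≥ 1`. -/
theorem cbs_recurrence_le (T : ℕ → ℕ → ℕ)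
    (h0 : ∀ r s : ℕ, r = 0 ∨ s = 0 → T r s = 1)
    (h1 : ∀ s : ℕ, 1 ≤ s → T 1 s = 3)
    (h2 : ∀ r s : ℕ, 2 ≤ r → 1 ≤ s → T r s = T (r - 1) s + T (r - 2) (s - 1) + 1) :
    ∀ r s : ℕ, 1 ≤ r → 1 ≤ s → T r s ≤ 3 * r ^ s := by
  intro r
  induction r using Nat.strong_induction_on with
  | _ r ih =>
    intro s hr hs
    rcases Nat.lt_or_ge r 2 with hr2 | hr2
    · have hr1 : r = 1 := by omega
      subst hr1
      rw [h1 s hs, one_pow]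
      omega
    · rw [h2 r s hr2 hs]
      have hA : T (r-1) s ≤ 3 * (r-1)^s := ih (r-1) (by omega) s (by omega) hs
      rcases Nat.eq_or_lt_of_le hs with hs1 | hs2
      · -- s = 1
        subst hs1
        have hB : T (r-2) (1-1) = 1 := h0 _ _ (Or.inr rfl)
        rw [pow_one] at hA ⊢
        omega
      · rcases Nat.eq_or_lt_of_le hr2 with hr2e | hr3
        · -- r = 2
          subst hr2e
          have hB : T (2-2) (s-1) = 1 := h0 _ _ (Or.inl rfl)
          norm_num at hA hB ⊢
          have h2s : (4:ℕ) ≤ 2^s := by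
            calc (4:ℕ) = 2^2 := rfl
            _ ≤ 2^s := Nat.pow_le_pow_right (by norm_num) (by omega)
          omega
        · -- r ≥ 3, s ≥ 2
          obtain ⟨t, rfl⟩ : ∃ t, s = t + 1 := ⟨s - 1, by omega⟩
          simp only [Nat.add_sub_cancel] at *
          have hB : T (r-2) t ≤ 3 * (r-2)^t :=
            ih (r-2) (by omega) t (by omega) (by omega)
          have key : (r-1)^(t+1) + (r-2)^t + 1 ≤ r^(t+1) := by
            have e1 : r^(t+1) = r * r^t := pow_succ' r t
            have e2 : (r-1)^(t+1) = (r-1) * (r-1)^t := pow_succ' (r-1) t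
            have h3 : r * (r-1)^t ≤ r * r^t := by
              gcongr; omega
            have h4 : (r-2)^t + 1 ≤ (r-1)^t := by
              have := Nat.pow_lt_pow_left (show r-2 < r-1 by omega) (show t ≠ 0 by omega)
              omega
            have h5 : r * (r-1)^t = (r-1) * (r-1)^t + (r-1)^t := by
              obtain ⟨k, rfl⟩ : ∃ k, r = k + 1 := ⟨r - 1, by omega⟩
              simp only [Nat.add_sub_cancel]
              ring
            calc (r-1)^(t+1) + (r-2)^t + 1 ≤ (r-1)*(r-1)^t + (r-1)^t := by
                  rw [e2]; omega
              _ = r * (r-1)^t := h5.symm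
              _ ≤ r * r^t := h3
              _ = r^(t+1) := e1.symm
          omega
end

section
/- Let T : ℕ → ℕ → ℕ be the CBS recurrence defined by T(r,s) = 1 whenever r = 0 or s = 0, T(1,s) = 3 for all s ≥ 1, and T(r,s) = T(r−1,s) + T(r−2,s−1) + 1 for all r ≥ 2 and s ≥ 1. Let F be the formal power series in two commuting variables X and Y over ℤ whose coefficient of X^r·Y^s equals T(r,s) for all r, s ≥ 0. Then (1 − X)·(1 − Y)·(1 − X − X²·Y) · F = 1 − X + 2·X·Y − X²·Y, as an identity of formal power series in ℤ⟦X,Y⟧. -/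
open MvPowerSeries

private lemma fin2_sub (r s a b : ℕ) :
    (Finsupp.single (0:Fin 2) r + Finsupp.single 1 s) -
      (Finsupp.single 0 a + Finsupp.single 1 b)
    = Finsupp.single 0 (r - a) + Finsupp.single 1 (s - b) := by
  ext i
  fin_cases i <;> simp [Finsupp.single_apply]

private lemma fin2_le (r s a b : ℕ) :
    (Finsupp.single (0:Fin 2) a + Finsupp.single 1 b) ≤
      (Finsupp.single 0 r + Finsupp.single 1 s) ↔ a ≤ r ∧ b ≤ s := by
  simp [Finsupp.le_def, Fin.forall_fin_two, Finsupp.single_apply]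

private lemma fin2_eq (r s a b : ℕ) :
    (Finsupp.single (0:Fin 2) r + Finsupp.single 1 s) =
      (Finsupp.single 0 a + Finsupp.single 1 b) ↔ r = a ∧ s = b := by
  constructor
  · intro h
    constructor
    · have := DFunLike.congr_fun h 0
      simpa [Finsupp.single_apply] using this
    · have := DFunLike.congr_fun h 1
      simpa [Finsupp.single_apply] using this
  · rintro ⟨rfl, rfl⟩; rfl

private lemma pow_mul_eq (a b : ℕ) :
    (X 0 : MvPowerSeries (Fin 2) ℤ) ^ a * (X 1) ^ b
      = monomial (R := ℤ) (Finsupp.single 0 a + Finsupp.single 1 b) 1 := by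
  rw [X_pow_eq, X_pow_eq, monomial_mul_monomial, one_mul]

private lemma coeff_shift (a b r s : ℕ) (F : MvPowerSeries (Fin 2) ℤ) :
    coeff (R := ℤ) (Finsupp.single 0 r + Finsupp.single 1 s) ((X 0) ^ a * (X 1) ^ b * F)
      = if a ≤ r ∧ b ≤ s then
          coeff (R := ℤ) (Finsupp.single 0 (r - a) + Finsupp.single 1 (s - b)) F else 0 := by
  rw [pow_mul_eq, coeff_monomial_mul, fin2_sub]
  simp only [fin2_le, one_mul]

private lemma coeff_mon (a b r s : ℕ) :
    coeff (R := ℤ) (Finsupp.single 0 r + Finsupp.single 1 s)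
        ((X 0 : MvPowerSeries (Fin 2) ℤ) ^ a * (X 1) ^ b)
      = if r = a ∧ s = b then 1 else 0 := by
  rw [pow_mul_eq, coeff_monomial]
  simp only [fin2_eq]

/-- The generating function `F(X,Y) = Σ T(r,s) X^r Y^s` of the CBS recurrence satisfies
`(1 - X)(1 - Y)(1 - X - X²Y) · F = 1 - X + 2XY - X²Y` in `ℤ⟦X,Y⟧`. -/
theorem cbs_generating_function (T : ℕ → ℕ → ℕ)
    (h0 : ∀ r s : ℕ, r = 0 ∨ s = 0 → T r s = 1)
    (h1 : ∀ s : ℕ, 1 ≤ s → T 1 s = 3)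
    (h2 : ∀ r s : ℕ, 2 ≤ r → 1 ≤ s → T r s = T (r - 1) s + T (r - 2) (s - 1) + 1)
    (F : MvPowerSeries (Fin 2) ℤ)
    (hF : ∀ r s : ℕ,
      MvPowerSeries.coeff (R := ℤ) (Finsupp.single 0 r + Finsupp.single 1 s) F = (T r s : ℤ)) :
    (1 - X 0) * (1 - X 1) * (1 - X 0 - (X 0) ^ 2 * X 1) * F
      = 1 - X 0 + 2 * X 0 * X 1 - (X 0) ^ 2 * X 1 := by
  have expandL : (1 - X 0) * (1 - X 1) * (1 - X 0 - (X 0) ^ 2 * X 1) * F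
      = (X 0 : MvPowerSeries (Fin 2) ℤ) ^ 0 * (X 1) ^ 0 * F
        - (X 0) ^ 1 * (X 1) ^ 0 * F - (X 0) ^ 1 * (X 1) ^ 0 * F
        - (X 0) ^ 0 * (X 1) ^ 1 * F
        + (X 0) ^ 2 * (X 1) ^ 0 * F
        + (X 0) ^ 1 * (X 1) ^ 1 * F + (X 0) ^ 1 * (X 1) ^ 1 * F
        - (X 0) ^ 2 * (X 1) ^ 1 * F - (X 0) ^ 2 * (X 1) ^ 1 * F
        + (X 0) ^ 3 * (X 1) ^ 1 * F
        + (X 0) ^ 2 * (X 1) ^ 2 * F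
        - (X 0) ^ 3 * (X 1) ^ 2 * F := by ring
  have expandR : (1 - X 0 + 2 * X 0 * X 1 - (X 0) ^ 2 * X 1 : MvPowerSeries (Fin 2) ℤ)
      = (X 0) ^ 0 * (X 1) ^ 0 - (X 0) ^ 1 * (X 1) ^ 0
        + (X 0) ^ 1 * (X 1) ^ 1 + (X 0) ^ 1 * (X 1) ^ 1
        - (X 0) ^ 2 * (X 1) ^ 1 := by ring
  rw [expandL, expandR]
  ext d
  have hd : d = Finsupp.single 0 (d 0) + Finsupp.single 1 (d 1) := by
    ext i; fin_cases i <;> simp [Finsupp.single_apply]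
  rw [hd]
  set r := d 0 with hr
  set s := d 1 with hs
  clear_value r s
  clear hd hr hs
  simp only [map_sub, map_add, coeff_shift, coeff_mon, hF]
  have n1 : ∀ n : ℕ, n + 1 + 1 + 1 - 1 = n + 1 + 1 := fun n => rfl
  have n2 : ∀ n : ℕ, n + 1 + 1 + 1 - 2 = n + 1 := fun n => rfl
  have m1 : ∀ n : ℕ, n + 1 + 1 - 1 = n + 1 := fun n => rfl
  have m2 : ∀ n : ℕ, n + 1 + 1 - 2 = n := fun n => rfl
  have m0 : ∀ n : ℕ, n + 1 - 1 = n := fun n => rfl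
  have n3 : ∀ n : ℕ, n + 1 + 1 + 1 - 3 = n := fun n => rfl
  rcases r with _ | _ | _ | r <;> rcases s with _ | _ | s <;> norm_num <;>
    (try simp only [n1, n2, n3, m0, m1, m2])
  · -- (0,0)
    simp [h0 0 0 (Or.inl rfl)]
  · -- (0,1)
    norm_num [h0 0 1 (Or.inl rfl), h0 0 0 (Or.inl rfl)]
  · -- (0,s+2)
    norm_num [h0 0 _ (Or.inl rfl)]
  · -- (1,0)
    norm_num [h0 1 0 (Or.inr rfl), h0 0 0 (Or.inl rfl)]
  · -- (1,1)
    norm_num [h1 1 le_rfl, h0 0 1 (Or.inl rfl), h0 1 0 (Or.inr rfl), h0 0 0 (Or.inl rfl)]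
  · -- (1,s+2)
    norm_num [h1 (s + 1 + 1) (by omega), h1 (s + 1) (by omega), h0 0 _ (Or.inl rfl)]
  · -- (2,0)
    norm_num [h0 _ 0 (Or.inr rfl), h0 0 0 (Or.inl rfl)]
  · -- (2,1)
    have e := h2 2 1 (by omega) (by omega)
    norm_num [h1 1 le_rfl, h0 0 0 (Or.inl rfl), h0 0 1 (Or.inl rfl),
      h0 1 0 (Or.inr rfl), h0 2 0 (Or.inr rfl)] at e ⊢
    omega
  · -- (2,s+2)
    have e1 := h2 2 (s + 1 + 1) (by omega) (by omega)
    have e2 := h2 2 (s + 1) (by omega) (by omega)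
    simp only [m1, m2] at e1 e2
    norm_num [h1 _ (show 1 ≤ s + 1 + 1 by omega), h1 _ (show 1 ≤ s + 1 by omega),
      h0 0 _ (Or.inl rfl)] at e1 e2 ⊢
    omega
  · -- (r+3,0)
    norm_num [h0 _ 0 (Or.inr rfl)]
  · -- (r+3,1)
    have e1 := h2 (r + 1 + 1 + 1) 1 (by omega) (by omega)
    have e2 := h2 (r + 1 + 1) 1 (by omega) (by omega)
    simp only [n1, n2, n3, m0, m1, m2] at e1 e2
    norm_num [h0 _ 0 (Or.inr rfl)] at e1 e2 ⊢
    omega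
  · -- (r+3,s+2)
    have e1 := h2 (r + 1 + 1 + 1) (s + 1 + 1) (by omega) (by omega)
    have e2 := h2 (r + 1 + 1) (s + 1 + 1) (by omega) (by omega)
    have e3 := h2 (r + 1 + 1 + 1) (s + 1) (by omega) (by omega)
    have e4 := h2 (r + 1 + 1) (s + 1) (by omega) (by omega)
    simp only [n1, n2, n3, m0, m1, m2] at e1 e2 e3 e4
    omega
end

section
/- Let r and s be real numbers with s > 0 and r > 2s, and set x = (r − 2s)/(r − s) and y = s(r − s)/(r − 2s)². Then (x, y) is a critical point of H(x,y) = (1 − x)(1 − y)(1 − x − x²y) for the direction (r, s): namely, (1 − x)(1 − y)(1 − x − x²y) = 0 and s · x · (1 − y) · (3x²y − 2x(y − 1) − 2) = r · y · (1 − x) · (x²(2y − 1) + x − 1). -/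
/-- The point `(x, y) = ((r-2s)/(r-s), s(r-s)/(r-2s)²)` is a critical point of
`H(x,y) = (1-x)(1-y)(1-x-x²y)` for the direction `(r, s)`. -/
theorem critical_point_simple (r s x y : ℝ) (hs : 0 < s) (hr : 2 * s < r)
    (hx : x = (r - 2 * s) / (r - s)) (hy : y = s * (r - s) / (r - 2 * s) ^ 2) :
    (1 - x) * (1 - y) * (1 - x - x ^ 2 * y) = 0 ∧
      s * x * ((1 - y) * (3 * x ^ 2 * y - 2 * x * (y - 1) - 2))
        = r * y * ((1 - x) * (x ^ 2 * (2 * y - 1) + x - 1)) := by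
  have h1 : r - 2 * s ≠ 0 := by linarith
  have h2 : r - s ≠ 0 := by linarith
  have h3 : r - s * 2 ≠ 0 := by linarith
  subst hx hy
  constructor <;> field_simp <;> ring
end
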